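/- arXiv:2405.08898 — 7 statements merged into one kernel-verified Lean document; each statement's English description precedes it below -/
import Mathlib

section
/- If M = [[α, β], [γ, δ]] is a 2×2 unitary complex matrix with β ≠ 0, then φ♯(M) := [[β⁻¹, -β⁻¹α], [δβ⁻¹, γ - δβ⁻¹α]] belongs to U(1,1), i.e. φ♯(M)* · diag(1,-1) · φ♯(M) = diag(1,-1). -/
open Matrix
theorem phiSharp_mem_U11 (α β γ δ : ℂ) (hβ : β ≠ 0)
    (hU : (!![α, β; γ, δ])ᴴ * !![α, β; γ, δ] = 1) :
    (!![β⁻¹, -β⁻¹ * α; δ * β⁻¹, γ - δ * β⁻¹ * α])ᴴ * !![(1 : ℂ), 0; 0, -1] *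
      !![β⁻¹, -β⁻¹ * α; δ * β⁻¹, γ - δ * β⁻¹ * α] = !![(1 : ℂ), 0; 0, -1] := by
  have h00 := congrFun (congrFun hU 0) 0
  have h01 := congrFun (congrFun hU 0) 1
  have h10 := congrFun (congrFun hU 1) 0
  have h11 := congrFun (congrFun hU 1) 1
  simp [Matrix.mul_apply, Fin.sum_univ_two, Matrix.conjTranspose_apply,
    Matrix.one_apply] at h00 h01 h10 h11
  have hβc : (starRingEnd ℂ) β ≠ 0 := by simpa using hβ
  ext i j
  fin_cases i <;> fin_cases j <;>
    simp only [Matrix.cons_val', Matrix.cons_val_zero, Matrix.cons_val_one, Matrix.head_cons,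
      Matrix.head_fin_const, Matrix.empty_val', Matrix.cons_val_fin_one, Matrix.mul_apply,
      Fin.sum_univ_two, Matrix.conjTranspose_apply, map_sub, map_neg, map_inv₀, _root_.map_mul,
      Matrix.of_apply, Matrix.cons_val_one, Matrix.head_cons, Fin.zero_eta, Fin.mk_one,
      Complex.star_def] <;>
    field_simp
  · linear_combination -h11
  · linear_combination (-β) * h10 + α * h11
  · linear_combination (-(starRingEnd ℂ β)) * h01 + (starRingEnd ℂ α) * h11
  · linear_combination (-(starRingEnd ℂ β * β)) * h00 + (α * starRingEnd ℂ β) * h01 +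
      (starRingEnd ℂ α * β) * h10 + (-(starRingEnd ℂ α * α)) * h11
end

section
/- If M = [[α, β], [γ, δ]] is a 2×2 unitary complex matrix with β ≠ 0, then φ♭(M) := [[γ - δβ⁻¹α, δβ⁻¹], [-β⁻¹α, β⁻¹]] belongs to U(1,1), i.e. φ♭(M)* diag(1,-1) φ♭(M) = diag(1,-1). -/
open Matrix
theorem phiFlat_mem_U11 (α β γ δ : ℂ) (hβ : β ≠ 0)
    (hU : (!![α, β; γ, δ])ᴴ * !![α, β; γ, δ] = 1) :
    (!![γ - δ * β⁻¹ * α, δ * β⁻¹; -β⁻¹ * α, β⁻¹])ᴴ * !![(1 : ℂ), 0; 0, -1] *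
      !![γ - δ * β⁻¹ * α, δ * β⁻¹; -β⁻¹ * α, β⁻¹] = !![(1 : ℂ), 0; 0, -1] := by
  have hβ' : (starRingEnd ℂ) β ≠ 0 := by simpa using hβ
  have hU2 : (!![α, β; γ, δ]) * (!![α, β; γ, δ])ᴴ = 1 := by
    rw [mul_eq_one_comm] at hU; exact hU
  have h00 := congr_fun (congr_fun hU 0) 0
  have h01 := congr_fun (congr_fun hU 0) 1
  have h10 := congr_fun (congr_fun hU 1) 0
  have h11 := congr_fun (congr_fun hU 1) 1
  have k00 := congr_fun (congr_fun hU2 0) 0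
  simp [Matrix.mul_apply, Fin.sum_univ_two, Matrix.one_apply] at h00 h01 h10 h11 k00
  ext i j
  fin_cases i <;> fin_cases j <;>
      simp [Matrix.mul_apply, Fin.sum_univ_two, map_sub, _root_.map_mul, map_inv₀,
        map_neg] <;>
      field_simp
  · linear_combination ((starRingEnd ℂ) β * β + (starRingEnd ℂ) δ * δ) * h00 + h11 -
      ((starRingEnd ℂ) β * α + (starRingEnd ℂ) δ * γ) * h01 - k00
  · linear_combination (starRingEnd ℂ) β * h01 - (starRingEnd ℂ) α * h11
  · linear_combination β * h10 - α * h11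
  · linear_combination h11
end

section
/- Let M be a 2×2 complex matrix with (1,2)-entry nonzero and such that I + M is invertible, and suppose the (1,2)-entry of (I+M)⁻¹M is also nonzero. Then φ♯((I+M)⁻¹ M) = [[1,1],[0,1]] · φ♯(M) · [[1,0],[-1,1]], where for N = [[α, β], [γ, δ]] with β ≠ 0, φ♯(N) = [[β⁻¹, -β⁻¹α], [δβ⁻¹, γ - δβ⁻¹α]]. -/
open Matrix

noncomputable def phiSharp (M : Matrix (Fin 2) (Fin 2) ℂ) : Matrix (Fin 2) (Fin 2) ℂ :=
  !![(M 0 1)⁻¹, -(M 0 1)⁻¹ * M 0 0;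
     M 1 1 * (M 0 1)⁻¹, M 1 0 - M 1 1 * (M 0 1)⁻¹ * M 0 0]

lemma key (a b c d : ℂ) (hb : b ≠ 0) (hD : (1+a)*(1+d) - b*c ≠ 0) :
    phiSharp ((1 + !![a,b;c,d])⁻¹ * !![a,b;c,d]) =
      !![(1 : ℂ), 1; 0, 1] * phiSharp !![a,b;c,d] * !![(1 : ℂ), 0; -1, 1] := by
  have h1 : (1 : Matrix (Fin 2) (Fin 2) ℂ) + !![a,b;c,d] = !![1+a, b; c, 1+d] := by
    rw [Matrix.one_fin_two]
    norm_num [Matrix.add_apply]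
  have hdet : (!![1+a, b; c, 1+d]).det = (1+a)*(1+d) - b*c := by
    simp [Matrix.det_fin_two]
  have hinv : (!![1+a, b; c, 1+d])⁻¹ =
      ((1+a)*(1+d) - b*c)⁻¹ • !![1+d, -b; -c, 1+a] := by
    rw [Matrix.inv_def, hdet, Ring.inverse_eq_inv', Matrix.adjugate_fin_two]
    norm_num
  set D := (1+a)*(1+d) - b*c with hDdef
  have hN : (1 + !![a,b;c,d])⁻¹ * !![a,b;c,d] =
      !![D⁻¹ * ((1+d)*a - b*c), D⁻¹ * b; D⁻¹ * c, D⁻¹ * ((1+a)*d - b*c)] := by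
    rw [h1, hinv]
    ext i j
    fin_cases i <;> fin_cases j <;>
      simp [Matrix.mul_apply, Fin.sum_univ_two] <;> field_simp <;> ring
  rw [hN]
  unfold phiSharp
  ext i j
  fin_cases i <;> fin_cases j <;>
    simp [Matrix.mul_apply, Fin.sum_univ_two] <;> field_simp <;> ring

theorem phiSharp_cayley (M : Matrix (Fin 2) (Fin 2) ℂ)
    (hβ : M 0 1 ≠ 0) (hdet : (1 + M).det ≠ 0) (hβ' : ((1 + M)⁻¹ * M) 0 1 ≠ 0) :
    phiSharp ((1 + M)⁻¹ * M) = !![(1 : ℂ), 1; 0, 1] * phiSharp M * !![(1 : ℂ), 0; -1, 1] := by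
  have hD : (1 + M 0 0) * (1 + M 1 1) - M 0 1 * M 1 0 ≠ 0 := by
    simpa [Matrix.det_fin_two, Matrix.add_apply, Matrix.one_apply] using hdet
  rw [Matrix.eta_fin_two M]
  exact key _ _ _ _ hβ hD
end

section
/- Let U be an n×n unitary complex matrix written in block form U = [[A,B],[C,D]] with A of size n₁×n₁ and D of size n₂×n₂, and let P be an n₂×n₂ unitary matrix. Then D - P is invertible if and only if the block matrix [[A,B],[C,D-P]] is invertible. -/
open Matrix

private lemma isUnit_unit_mul {M : Type*} [Monoid M] {u x : M} (hu : IsUnit u) :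
    IsUnit (u * x) ↔ IsUnit x := by
  obtain ⟨u, rfl⟩ := hu; exact Units.isUnit_units_mul u x

private lemma isUnit_mul_unit {M : Type*} [Monoid M] {u x : M} (hu : IsUnit u) :
    IsUnit (x * u) ↔ IsUnit x := by
  obtain ⟨u, rfl⟩ := hu; exact Units.isUnit_mul_units x u

theorem schur_block_invertible_iff (n₁ n₂ : ℕ)
    (A : Matrix (Fin n₁) (Fin n₁) ℂ) (B : Matrix (Fin n₁) (Fin n₂) ℂ)
    (C : Matrix (Fin n₂) (Fin n₁) ℂ) (D : Matrix (Fin n₂) (Fin n₂) ℂ)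
    (P : Matrix (Fin n₂) (Fin n₂) ℂ)
    (hU : (fromBlocks A B C D)ᴴ * fromBlocks A B C D = 1)
    (hP : Pᴴ * P = 1) :
    IsUnit (D - P) ↔ IsUnit (fromBlocks A B C (D - P)) := by
  have hUc : IsUnit (fromBlocks A B C D)ᴴ := by
    rw [Matrix.isUnit_iff_isUnit_det]
    exact IsUnit.of_mul_eq_one _ (by rw [← det_mul, hU, det_one])
  have hPc : IsUnit Pᴴ := by
    rw [Matrix.isUnit_iff_isUnit_det]
    exact IsUnit.of_mul_eq_one _ (by rw [← det_mul, hP, det_one])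
  have hPP : P * Pᴴ = 1 := mul_eq_one_comm.mp hP
  have hM : fromBlocks A B C (D - P) =
      fromBlocks A B C D + fromBlocks 0 0 0 (-P) := by
    rw [fromBlocks_add]; simp [sub_eq_add_neg]
  have hkey : (fromBlocks A B C D)ᴴ * fromBlocks A B C (D - P) =
      fromBlocks 1 (-(Cᴴ * P)) 0 (1 - Dᴴ * P) := by
    rw [hM, mul_add, hU, fromBlocks_conjTranspose, fromBlocks_multiply]
    rw [← fromBlocks_one, fromBlocks_add]
    congr 1 <;> simp [sub_eq_add_neg]
  have h1 : IsUnit ((fromBlocks A B C D)ᴴ * fromBlocks A B C (D - P)) ↔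
      IsUnit (fromBlocks A B C (D - P)) := isUnit_unit_mul hUc
  rw [← h1, hkey]
  have h2 : IsUnit (fromBlocks 1 (-(Cᴴ * P)) (0 : Matrix (Fin n₂) (Fin n₁) ℂ) (1 - Dᴴ * P)) ↔ IsUnit (1 - Dᴴ * P) := by
    rw [Matrix.isUnit_iff_isUnit_det, det_fromBlocks_zero₂₁, det_one, one_mul,
      ← Matrix.isUnit_iff_isUnit_det]
  rw [h2]
  rw [← isUnit_mul_unit hPc (x := 1 - Dᴴ * P)]
  have : (1 - Dᴴ * P) * Pᴴ = -(D - P)ᴴ := by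
    rw [sub_mul, one_mul, mul_assoc, hPP, mul_one, conjTranspose_sub, neg_sub]
  rw [this, IsUnit.neg_iff, isUnit_conjTranspose]
end

section
/- Let U = [[A,B],[C,D]] be an n×n unitary complex matrix in block form, and let P be an n₂×n₂ unitary matrix such that D - P is invertible. Then the Schur complement A - B(D-P)⁻¹C is a unitary n₁×n₁ matrix. -/
set_option maxHeartbeats 1000000

open Matrix

theorem schur_complement_unitary (n₁ n₂ : ℕ)
    (A : Matrix (Fin n₁) (Fin n₁) ℂ) (B : Matrix (Fin n₁) (Fin n₂) ℂ)
    (C : Matrix (Fin n₂) (Fin n₁) ℂ) (D : Matrix (Fin n₂) (Fin n₂) ℂ)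
    (P : Matrix (Fin n₂) (Fin n₂) ℂ)
    (hU : (fromBlocks A B C D)ᴴ * fromBlocks A B C D = 1)
    (hU' : fromBlocks A B C D * (fromBlocks A B C D)ᴴ = 1)
    (hP : Pᴴ * P = 1)
    (hDP : IsUnit (D - P)) :
    A - B * (D - P)⁻¹ * C ∈ Matrix.unitaryGroup (Fin n₁) ℂ := by
  set R : Matrix (Fin n₂) (Fin n₂) ℂ := (D - P)⁻¹ with hR
  have hdet : IsUnit (D - P).det := (Matrix.isUnit_iff_isUnit_det _).mp hDP
  have hER : (D - P) * R = 1 := Matrix.mul_nonsing_inv _ hdet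
  have hRE : R * (D - P) = 1 := Matrix.nonsing_inv_mul _ hdet
  have hERs : (D - P)ᴴ * Rᴴ = 1 := by
    rw [← conjTranspose_mul, hRE, conjTranspose_one]
  have hRsE : Rᴴ * (D - P)ᴴ = 1 := by
    rw [← conjTranspose_mul, hER, conjTranspose_one]
  have hPP : P * Pᴴ = 1 := by
    rw [mul_eq_one_comm] at hP; exact hP
  rw [fromBlocks_conjTranspose, fromBlocks_multiply, ← fromBlocks_one,
    fromBlocks_inj] at hU'
  obtain ⟨k11, k12, k21, k22⟩ := hU'
  -- key identity (all square n₂×n₂, so noncomm_ring applies)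
  have hERs' : (Dᴴ - Pᴴ) * Rᴴ = 1 := by rw [← conjTranspose_sub]; exact hERs
  have key2 : Dᴴ * Rᴴ + R * D + R * Rᴴ - R * (D * Dᴴ) * Rᴴ = 1 := by
    calc Dᴴ * Rᴴ + R * D + R * Rᴴ - R * (D * Dᴴ) * Rᴴ
        = (R * (D - P)) * (Dᴴ * Rᴴ) + R * (D * ((Dᴴ - Pᴴ) * Rᴴ))
          + R * (P * Pᴴ) * Rᴴ - R * (D * Dᴴ) * Rᴴ := by
          rw [hRE, hERs', hPP]; noncomm_ring
      _ = (R * (D - P)) * ((Dᴴ - Pᴴ) * Rᴴ) := by noncomm_ring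
      _ = 1 := by rw [hRE, hERs', Matrix.one_mul]
  -- block identities in convenient form
  have hAA : A * Aᴴ = 1 - B * Bᴴ := eq_sub_of_add_eq k11
  have hCC' : ∀ X : Matrix (Fin n₂) (Fin n₁) ℂ, C * (Cᴴ * X) = X - D * (Dᴴ * X) := by
    intro X
    rw [← Matrix.mul_assoc, eq_sub_of_add_eq k22, Matrix.sub_mul, Matrix.one_mul,
      Matrix.mul_assoc]
  have hAC' : ∀ X : Matrix (Fin n₂) (Fin n₁) ℂ, A * (Cᴴ * X) = -(B * (Dᴴ * X)) := by
    intro X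
    rw [← Matrix.mul_assoc, eq_neg_of_add_eq_zero_left k12, Matrix.neg_mul,
      Matrix.mul_assoc]
  have hCA : C * Aᴴ = -(D * Bᴴ) := eq_neg_of_add_eq_zero_left k21
  -- the collected identity
  have main := congrArg (fun M => B * (M * Bᴴ)) key2
  simp only [Matrix.add_mul, Matrix.sub_mul, Matrix.mul_add, Matrix.mul_sub,
    Matrix.one_mul, Matrix.mul_assoc] at main
  rw [Matrix.mem_unitaryGroup_iff]
  have hstar : star (A - B * R * C) = Aᴴ - Cᴴ * (Rᴴ * Bᴴ) := by
    show (A - B * R * C)ᴴ = _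
    rw [conjTranspose_sub, conjTranspose_mul, conjTranspose_mul]
  rw [hstar]
  simp only [Matrix.sub_mul, Matrix.mul_sub, Matrix.mul_assoc]
  rw [hAA, hAC' (Rᴴ * Bᴴ), hCA, hCC' (Rᴴ * Bᴴ)]
  simp only [Matrix.mul_neg, Matrix.mul_sub, Matrix.neg_mul]
  rw [← main]
  abel
end

section
/- Let U = [[A,B],[C,D]] be an n×n unitary complex matrix in block form. Let P, W ∈ ℂ^{n₂×n₂} satisfy W*P = I, and suppose D - P and D - W are both invertible. Then (A - B(D-W)⁻¹C)* (A - B(D-P)⁻¹C) = I_{n₁}. -/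
open Matrix
set_option maxHeartbeats 1000000

theorem schur_complement_isometry (n₁ n₂ : ℕ)
    (A : Matrix (Fin n₁) (Fin n₁) ℂ) (B : Matrix (Fin n₁) (Fin n₂) ℂ)
    (C : Matrix (Fin n₂) (Fin n₁) ℂ) (D : Matrix (Fin n₂) (Fin n₂) ℂ)
    (P W : Matrix (Fin n₂) (Fin n₂) ℂ)
    (hU : (fromBlocks A B C D)ᴴ * fromBlocks A B C D = 1)
    (hU' : fromBlocks A B C D * (fromBlocks A B C D)ᴴ = 1)
    (hWP : Wᴴ * P = 1)
    (hDP : IsUnit (D - P)) (hDW : IsUnit (D - W)) :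
    (A - B * (D - W)⁻¹ * C)ᴴ * (A - B * (D - P)⁻¹ * C) = 1 := by
  set X := (D - W)⁻¹ with hXdef
  set Y := (D - P)⁻¹ with hYdef
  have hdW := (Matrix.isUnit_iff_isUnit_det _).mp hDW
  have hdP := (Matrix.isUnit_iff_isUnit_det _).mp hDP
  have hXr : (D - W) * X = 1 := Matrix.mul_nonsing_inv _ hdW
  have hYl : (D - P) * Y = 1 := Matrix.mul_nonsing_inv _ hdP
  have hXHl : Xᴴ * (D - W)ᴴ = 1 := by
    rw [← conjTranspose_mul, hXr, conjTranspose_one]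
  -- block identities from unitarity
  rw [fromBlocks_conjTranspose, fromBlocks_multiply, ← fromBlocks_one] at hU
  rw [Matrix.fromBlocks_inj] at hU
  obtain ⟨h11, h12, h21, h22⟩ := hU
  have hAA : Aᴴ * A = 1 - Cᴴ * C := eq_sub_of_add_eq h11
  have hAB : Aᴴ * B = -(Cᴴ * D) := eq_neg_of_add_eq_zero_left h12
  have hBA : Bᴴ * A = -(Dᴴ * C) := eq_neg_of_add_eq_zero_left h21
  have hBB : Bᴴ * B = 1 - Dᴴ * D := eq_sub_of_add_eq h22
  -- key identity
  have inner : (D - W)ᴴ * D + Dᴴ * (D - P) + (1 - Dᴴ * D) = (D - W)ᴴ * (D - P) := by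
    simp only [conjTranspose_sub, sub_mul, mul_sub, hWP]
    noncomm_ring
  have key : D * Y + Xᴴ * Dᴴ + Xᴴ * (1 - Dᴴ * D) * Y = 1 := by
    have t1 : Xᴴ * ((D - W)ᴴ * D) * Y = D * Y := by
      rw [← mul_assoc, hXHl, one_mul]
    have t2 : Xᴴ * (Dᴴ * (D - P)) * Y = Xᴴ * Dᴴ := by
      rw [mul_assoc Xᴴ (Dᴴ * (D - P)) Y, mul_assoc Dᴴ, hYl, mul_one]
    have t3 : Xᴴ * ((D - W)ᴴ * (D - P)) * Y = 1 := by
      rw [← mul_assoc, hXHl, one_mul, hYl]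
    calc D * Y + Xᴴ * Dᴴ + Xᴴ * (1 - Dᴴ * D) * Y
        = Xᴴ * ((D - W)ᴴ * D) * Y + Xᴴ * (Dᴴ * (D - P)) * Y
            + Xᴴ * (1 - Dᴴ * D) * Y := by rw [t1, t2]
      _ = Xᴴ * ((D - W)ᴴ * D + Dᴴ * (D - P) + (1 - Dᴴ * D)) * Y := by
            noncomm_ring
      _ = Xᴴ * ((D - W)ᴴ * (D - P)) * Y := by rw [inner]
      _ = 1 := t3
  -- assemble
  have e1 : (A - B * X * C)ᴴ * (A - B * Y * C)
      = Aᴴ * A - Aᴴ * (B * (Y * C)) - Cᴴ * (Xᴴ * (Bᴴ * A))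
          + Cᴴ * (Xᴴ * (Bᴴ * (B * (Y * C)))) := by
    simp only [conjTranspose_sub, conjTranspose_mul, sub_mul, mul_sub, Matrix.mul_assoc]
    abel
  rw [e1, ← Matrix.mul_assoc Aᴴ B (Y * C), hAB, hBA, hAA,
    ← Matrix.mul_assoc Bᴴ B (Y * C), hBB]
  calc 1 - Cᴴ * C - -(Cᴴ * D) * (Y * C) - Cᴴ * (Xᴴ * -(Dᴴ * C))
        + Cᴴ * (Xᴴ * ((1 - Dᴴ * D) * (Y * C)))
      = 1 - Cᴴ * C + Cᴴ * ((D * Y + Xᴴ * Dᴴ + Xᴴ * (1 - Dᴴ * D) * Y) * C) := by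
        simp only [Matrix.sub_mul, Matrix.add_mul, Matrix.mul_add, Matrix.mul_sub,
          Matrix.mul_neg, Matrix.neg_mul, Matrix.one_mul, Matrix.mul_one, Matrix.mul_assoc]
        abel
    _ = 1 := by rw [key, Matrix.one_mul]; simp
end

section
/- If T ∈ ℂ^{2×2} satisfies T* diag(1,-1) T = diag(1,-1), then (Tr T)² / det T is a nonnegative real number. -/
open Matrix

theorem U11_trace_sq_div_det_nonneg (T : Matrix (Fin 2) (Fin 2) ℂ)
    (hT : Tᴴ * !![(1 : ℂ), 0; 0, -1] * T = !![(1 : ℂ), 0; 0, -1]) :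
    ∃ r : ℝ, 0 ≤ r ∧ (T.trace) ^ 2 / T.det = (r : ℂ) := by
  obtain ⟨a, b, c, d, rfl⟩ : ∃ a b c d, T = !![a, b; c, d] :=
    ⟨_, _, _, _, (Matrix.eta_fin_two T)⟩
  have e1 := congrFun (congrFun hT 0) 0
  have e2 := congrFun (congrFun hT 0) 1
  simp [Matrix.mul_apply, Fin.sum_univ_succ, Matrix.conjTranspose_apply] at e1 e2
  have hdet := congrArg Matrix.det hT
  simp [Matrix.det_mul, Matrix.det_fin_two_of, Matrix.det_conjTranspose] at hdet
  have H1 : (starRingEnd ℂ) a * (a * d - b * c) = d := by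
    linear_combination d * e1 - c * e2
  have H2 := congrArg (starRingEnd ℂ) H1
  simp only [_root_.map_mul, map_sub, Complex.conj_conj] at H2
  refine ⟨Complex.normSq (a + d), Complex.normSq_nonneg _, ?_⟩
  have hD : (!![a,b;c,d]).det = a * d - b * c := by simp [Matrix.det_fin_two_of]
  have htr : (!![a,b;c,d]).trace = a + d := by simp [Matrix.trace_fin_two_of]
  rw [hD, htr]
  have hdne : a * d - b * c ≠ 0 := by
    intro h; rw [h] at hdet; simp at hdet
  rw [div_eq_iff hdne, ← Complex.mul_conj (a + d)]
  simp only [map_add]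
  linear_combination (-(a + d)) * H1 + ((a + d) * (a * d - b * c)) * H2 + ((a + d) * a) * hdet
end
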